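/- Let K be a closed convex cone in Y and F a face of K such that K* + F^⊥ is not closed. Then there exist (a_1,…,a_{k+1}) ∈ FR_{k+1}(K*) with k ≥ 1 and (y_1,…,y_{ℓ+1}) ∈ FR_{ℓ+1}(K) with ℓ ≥ 1 such that a_i ∈ span(F) for all i, y_j ∈ F^⊥ for j = 1,…,ℓ, ⟨a_i, y_{ℓ+1}⟩ = 0 for i ≤ k, and ⟨a_{k+1}, y_{ℓ+1}⟩ = −1. Conversely, the existence of such sequences implies K* + F^⊥ is not closed. -/

import Mathlib

open scoped RealInnerProductSpace

variable {Y : Type*} [NormedAddCommGroup Y] [InnerProductSpace ℝ Y] [FiniteDimensional ℝ Y]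

/-- The dual cone of a set `S`: all vectors having nonnegative inner product with every
element of `S`. -/
def dualSet (S : Set Y) : Set Y := {y | ∀ x ∈ S, 0 ≤ ⟪x, y⟫}

/-- The orthogonal complement (as a set) of the span of `S`. -/
def perpSet (S : Set Y) : Set Y := {y | ∀ x ∈ S, ⟪x, y⟫ = 0}

/-- `K ∩ y₁^⊥ ∩ … ∩ y_{i-1}^⊥`. -/
def frCut {k : ℕ} (K : Set Y) (y : Fin k → Y) (i : Fin k) : Set Y :=
  K ∩ {x | ∀ j : Fin k, j < i → ⟪y j, x⟫ = 0}

/-- Membership in the order-`k` facial reduction cone `FR_k(K)`: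
`y₁ ∈ K*` and `y_i ∈ (K ∩ y₁^⊥ ∩ … ∩ y_{i-1}^⊥)*` for each `i`. -/
def IsFRSeq {k : ℕ} (K : Set Y) (y : Fin k → Y) : Prop :=
  ∀ i : Fin k, y i ∈ dualSet (frCut K y i)


/-- `F` is a face of the cone `K`. -/
def IsFace (K F : Set Y) : Prop :=
  F ⊆ K ∧ Convex ℝ F ∧
    ∀ y z : Y, y ∈ K → z ∈ K → (2⁻¹ : ℝ) • (y + z) ∈ F → y ∈ F ∧ z ∈ F


set_option linter.unusedSectionVars false

section Helpers
open scoped Pointwise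

lemma zero_mem_dualSet (S : Set Y) : (0 : Y) ∈ dualSet S := by
  intro x _; rw [inner_zero_right]

lemma dualSet_anti {S T : Set Y} (h : S ⊆ T) : dualSet T ⊆ dualSet S :=
  fun _ hy x hx => hy x (h hx)

lemma smul_mem_dualSet {S : Set Y} {a : Y} (ha : a ∈ dualSet S) {t : ℝ} (ht : 0 ≤ t) :
    t • a ∈ dualSet S := by
  intro x hx
  rw [real_inner_smul_right]
  exact mul_nonneg ht (ha x hx)

lemma convex_dualSet (S : Set Y) : Convex ℝ (dualSet S) := by
  intro u hu v hv p q hp hq _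
  intro x hx
  rw [inner_add_right, real_inner_smul_right, real_inner_smul_right]
  exact add_nonneg (mul_nonneg hp (hu x hx)) (mul_nonneg hq (hv x hx))

lemma isClosed_dualSet (S : Set Y) : IsClosed (dualSet S) := by
  have : dualSet S = ⋂ x ∈ S, {y : Y | 0 ≤ ⟪x, y⟫} := by
    ext y; simp [dualSet]
  rw [this]
  exact isClosed_biInter fun x _ => isClosed_le continuous_const (continuous_const.inner continuous_id)

lemma dualSet_eq_innerDualCone (S : Set Y) : dualSet S = (ProperCone.innerDual S : Set Y) := by
  ext y; simp [dualSet]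

/-- Bipolar theorem for convex cones given as sets. -/
lemma dualSet_dualSet {S : Set Y} (hconv : Convex ℝ S)
    (hcone : ∀ c : ℝ, 0 ≤ c → ∀ x ∈ S, c • x ∈ S) (h0 : (0 : Y) ∈ S) :
    dualSet (dualSet S) = closure S := by
  have hccone : ∀ c : ℝ, 0 < c → ∀ x ∈ closure S, c • x ∈ closure S := by
    intro c hc x hx
    have : c • x ∈ (fun p : Y => c • p) '' closure S := ⟨x, hx, rfl⟩
    have hmaps : (fun p : Y => c • p) '' closure S ⊆ closure S := by
      refine subset_trans (image_closure_subset_closure_image (continuous_const_smul c)) ?_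
      apply closure_mono
      rintro p ⟨q, hq, rfl⟩
      exact hcone c hc.le q hq
    exact hmaps this
  set C : ConvexCone ℝ Y :=
    { carrier := closure S
      smul_mem' := fun c hc x hx => hccone c hc x hx
      add_mem' := by
        intro x hx y hy
        have h2 : (2:ℝ) • ((2⁻¹:ℝ) • x + (2⁻¹:ℝ) • y) = x + y := by
          rw [smul_add, smul_smul, smul_smul]; norm_num
        have hmid : (2⁻¹:ℝ) • x + (2⁻¹:ℝ) • y ∈ closure S :=
          hconv.closure hx hy (by norm_num) (by norm_num) (by norm_num)
        have h3 := hccone 2 (by norm_num) _ hmid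
        rwa [h2] at h3 } with hC
  have hCne : (C : Set Y).Nonempty := ⟨0, subset_closure h0⟩
  have hCcl : IsClosed (C : Set Y) := isClosed_closure
  set P : ProperCone ℝ Y :=
    { carrier := closure S
      add_mem' := fun hx hy => C.add_mem' hx hy
      zero_mem' := subset_closure h0
      smul_mem' := by
        intro c x hx
        rcases eq_or_lt_of_le c.2 with hc | hc
        · have hc0 : c = 0 := NNReal.eq hc.symm
          rw [hc0, zero_smul]; exact subset_closure h0
        · show (c:ℝ) • x ∈ closure S
          exact hccone c hc x hx
      isClosed' := isClosed_closure } with hP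
  have := ProperCone.innerDual_innerDual P
  have hdc : dualSet (closure S) = dualSet S := by
    apply Set.Subset.antisymm (dualSet_anti subset_closure)
    intro y hy x hx
    have hcont : Continuous fun p : Y => ⟪p, y⟫ := continuous_id.inner continuous_const
    have : ∀ p ∈ S, 0 ≤ ⟪p, y⟫ := hy
    exact le_on_closure (f := fun p : Y => (0:ℝ)) (g := fun p : Y => ⟪p, y⟫)
      this continuous_const.continuousOn hcont.continuousOn hx
  calc dualSet (dualSet S) = dualSet (dualSet (closure S)) := by rw [hdc]
    _ = closure S := by
        have h2 :=
          congrArg (fun c : ProperCone ℝ Y => (c : Set Y)) this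
        exact h2

lemma perpSet_eq (F : Set Y) : perpSet F = ((Submodule.span ℝ F)ᗮ : Set Y) := by
  ext y
  constructor
  · intro hy
    rw [SetLike.mem_coe, Submodule.mem_orthogonal]
    intro u hu
    induction hu using Submodule.span_induction with
    | mem x hx => exact hy x hx
    | zero => exact inner_zero_left y
    | add x z _ _ hx hz => rw [inner_add_left, hx, hz, add_zero]
    | smul c x _ hx => rw [inner_smul_left, hx, mul_zero]
  · intro hy x hx
    exact (Submodule.mem_orthogonal _ y).mp hy x (Submodule.subset_span hx)

lemma zero_mem_perpSet (F : Set Y) : (0 : Y) ∈ perpSet F := fun x _ => inner_zero_right x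

lemma inner_eq_zero_of_span_perp {F : Set Y} {a v : Y} (ha : a ∈ Submodule.span ℝ F)
    (hv : v ∈ perpSet F) : ⟪a, v⟫ = 0 := by
  rw [perpSet_eq] at hv
  exact (Submodule.mem_orthogonal _ v).mp hv a ha

lemma dualSet_submodule (W : Submodule ℝ Y) : dualSet (W : Set Y) = (Wᗮ : Set Y) := by
  ext y
  constructor
  · intro hy
    rw [SetLike.mem_coe, Submodule.mem_orthogonal]
    intro u hu
    have h1 := hy u hu
    have h2 := hy (-u) (neg_mem hu)
    rw [inner_neg_left] at h2
    linarith
  · intro hy x hx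
    rw [(Submodule.mem_orthogonal _ y).mp hy x hx]

lemma dualSet_add {A B : Set Y} (h0A : (0:Y) ∈ A) (h0B : (0:Y) ∈ B) :
    dualSet (A + B) = dualSet A ∩ dualSet B := by
  ext y
  constructor
  · intro hy
    constructor
    · intro x hx
      have := hy (x + 0) (Set.add_mem_add hx h0B)
      rwa [add_zero] at this
    · intro x hx
      have := hy (0 + x) (Set.add_mem_add h0A hx)
      rwa [zero_add] at this
  · rintro ⟨h1, h2⟩ x hx
    rcases Set.mem_add.mp hx with ⟨u, hu, v, hv, rfl⟩
    rw [inner_add_left]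
    exact add_nonneg (h1 u hu) (h2 v hv)

section Face
variable {K F : Set Y} (hF : IsFace K F)
  (hKcone : ∀ c : ℝ, 0 ≤ c → ∀ x ∈ K, c • x ∈ K) (hK0 : (0 : Y) ∈ K)

include hF hKcone hK0

lemma face_zero_mem (hne : F.Nonempty) : (0 : Y) ∈ F := by
  obtain ⟨f, hf⟩ := hne
  have h2f : (2:ℝ) • f ∈ K := hKcone 2 (by norm_num) f (hF.1 hf)
  have : (2⁻¹ : ℝ) • ((2:ℝ) • f + 0) ∈ F := by
    rw [add_zero, smul_smul]; norm_num; exact hf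
  exact (hF.2.2 _ _ h2f hK0 this).2

lemma face_smul_mem (h0F : (0:Y) ∈ F) {t : ℝ} (ht : 0 ≤ t) {x : Y} (hx : x ∈ F) :
    t • x ∈ F := by
  -- first: doubling via iterated argument for t ≤ 2^n
  have key : ∀ n : ℕ, ∀ s : ℝ, 0 ≤ s → s ≤ 2 ^ n → ∀ z ∈ F, s • z ∈ F := by
    intro n
    induction n with
    | zero =>
      intro s hs0 hs1 z hz
      have := hF.2.1 h0F hz (by linarith : (0:ℝ) ≤ 1 - s) hs0 (by ring)
      rwa [smul_zero, zero_add] at this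
    | succ n ih =>
      intro s hs0 hs2 z hz
      have hhalf : (s / 2) • z ∈ F := by
        apply ih (s/2) (by linarith)
        · rw [pow_succ] at hs2; linarith
        · exact hz
      -- now double: s • z = 2 • ((s/2) • z)
      have hmem : (s/2) • z ∈ K := hF.1 hhalf
      have h2 : (2:ℝ) • ((s/2) • z) ∈ K := hKcone 2 (by norm_num) _ hmem
      have heq : (2⁻¹ : ℝ) • ((2:ℝ) • ((s/2) • z) + 0) = (s/2) • z := by
        rw [add_zero, smul_smul]; norm_num
      have := (hF.2.2 _ _ h2 hK0 (by rw [heq]; exact hhalf)).1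
      rwa [smul_smul, show (2:ℝ) * (s/2) = s by ring] at this
  obtain ⟨n, hn⟩ := pow_unbounded_of_one_lt t (by norm_num : (1:ℝ) < 2)
  exact key n t ht hn.le x hx

lemma face_add_mem (h0F : (0:Y) ∈ F) {x y : Y} (hx : x ∈ F) (hy : y ∈ F) : x + y ∈ F := by
  have hmid : (2⁻¹:ℝ) • x + (2⁻¹:ℝ) • y ∈ F := hF.2.1 hx hy (by norm_num) (by norm_num) (by norm_num)
  have := face_smul_mem hF hKcone hK0 h0F (by norm_num : (0:ℝ) ≤ 2) hmid
  rwa [smul_add, smul_smul, smul_smul, show (2:ℝ)*2⁻¹ = 1 by norm_num, one_smul, one_smul] at this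

lemma face_inter_span (h0F : (0:Y) ∈ F) : K ∩ (Submodule.span ℝ F : Set Y) ⊆ F := by
  rintro x ⟨hxK, hxspan⟩
  -- every element of span F is a difference of two elements of F
  have hdiff : ∀ u ∈ Submodule.span ℝ F, ∃ f₁ ∈ F, ∃ f₂ ∈ F, u = f₁ - f₂ := by
    intro u hu
    induction hu using Submodule.span_induction with
    | mem v hv => exact ⟨v, hv, 0, h0F, by rw [sub_zero]⟩
    | zero => exact ⟨0, h0F, 0, h0F, by rw [sub_zero]⟩
    | add v w _ _ hv hw =>
      obtain ⟨a, ha, b, hb, rfl⟩ := hv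
      obtain ⟨c, hc, d, hd, rfl⟩ := hw
      exact ⟨a + c, face_add_mem hF hKcone hK0 h0F ha hc,
        b + d, face_add_mem hF hKcone hK0 h0F hb hd, by abel⟩
    | smul c v _ hv =>
      obtain ⟨a, ha, b, hb, rfl⟩ := hv
      rcases le_or_gt 0 c with hc | hc
      · exact ⟨c • a, face_smul_mem hF hKcone hK0 h0F hc ha,
          c • b, face_smul_mem hF hKcone hK0 h0F hc hb, by rw [smul_sub]⟩
      · refine ⟨(-c) • b, face_smul_mem hF hKcone hK0 h0F (by linarith) hb,
          (-c) • a, face_smul_mem hF hKcone hK0 h0F (by linarith) ha, ?_⟩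
        rw [smul_sub, neg_smul, neg_smul]; abel
  obtain ⟨f₁, hf₁, f₂, hf₂, hx⟩ := hdiff x hxspan
  -- x + f₂ = f₁ ∈ F, so midpoint trick: 2⁻¹ • (x + f₂) = 2⁻¹ • f₁ ∈ F
  have hhalf : (2⁻¹:ℝ) • f₁ ∈ F := face_smul_mem hF hKcone hK0 h0F (by norm_num) hf₁
  have : (2⁻¹:ℝ) • (x + f₂) ∈ F := by
    rw [hx, sub_add_cancel]; exact hhalf
  exact (hF.2.2 x f₂ hxK (hF.1 hf₂) this).1

end Face

section InteriorTools
variable {E : Type*} [NormedAddCommGroup E] [NormedSpace ℝ E]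

lemma convex_subset_closure_interior {s : Set E} (hs : Convex ℝ s)
    (hne : (interior s).Nonempty) : s ⊆ closure (interior s) := by
  obtain ⟨x0, hx0⟩ := hne
  intro y hy
  have htend : Filter.Tendsto (fun t : ℝ => t • x0 + (1 - t) • y)
      (nhdsWithin 0 (Set.Ioi 0)) (nhds y) := by
    have hc : Continuous (fun t : ℝ => t • x0 + (1 - t) • y) := by
      apply Continuous.add
      · exact continuous_id.smul continuous_const
      · exact (continuous_const.sub continuous_id).smul continuous_const
    have := (hc.tendsto 0).mono_left (nhdsWithin_le_nhds (s := Set.Ioi 0))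
    simpa using this
  refine mem_closure_of_tendsto htend ?_
  have hev : ∀ᶠ t : ℝ in nhdsWithin 0 (Set.Ioi 0), t < 1 :=
    Filter.Eventually.filter_mono nhdsWithin_le_nhds (eventually_lt_nhds (by norm_num))
  filter_upwards [self_mem_nhdsWithin, hev] with t ht ht1
  exact hs.combo_interior_closure_mem_interior hx0 (subset_closure hy)
    ht (by linarith [Set.mem_Ioi.mp ht]) (by ring)

lemma interior_nonempty_of_span_top [FiniteDimensional ℝ E] {s : Set E} (hconv : Convex ℝ s)
    (h0 : (0 : E) ∈ s) (hspan : Submodule.span ℝ s = ⊤) : (interior s).Nonempty := by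
  rw [hconv.interior_nonempty_iff_affineSpan_eq_top]
  rw [AffineSubspace.affineSpan_eq_top_iff_vectorSpan_eq_top_of_nonempty ℝ E E ⟨0, h0⟩]
  rw [eq_top_iff, ← hspan]
  apply Submodule.span_le.2
  intro x hx
  simpa using vsub_mem_vectorSpan ℝ hx h0

end InteriorTools

section Descent

variable {C : Set Y} (hconv : Convex ℝ C)
  (hcone : ∀ c : ℝ, 0 ≤ c → ∀ x ∈ C, c • x ∈ C) (h0C : (0:Y) ∈ C)

/-- Preimage of `C` in its span has full span. -/
lemma span_preimage_top (hconv : Convex ℝ C) :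
    Submodule.span ℝ (((Submodule.span ℝ C).subtype) ⁻¹' C) = ⊤ := by
  set V := Submodule.span ℝ C
  set D := (V.subtype) ⁻¹' C
  have himg : V.subtype '' D = C := by
    apply Set.image_preimage_eq_of_subset
    intro x hx
    exact ⟨⟨x, Submodule.subset_span hx⟩, rfl⟩
  have hmap : Submodule.map V.subtype (Submodule.span ℝ D) = V := by
    rw [Submodule.map_span, himg]
  rw [eq_top_iff]
  rintro v -
  have hv : (v : Y) ∈ Submodule.map V.subtype (Submodule.span ℝ D) := by rw [hmap]; exact v.2
  obtain ⟨d, hd, hdv⟩ := hv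
  have : d = v := Subtype.ext hdv
  rwa [this] at hd

end Descent

section FactR
variable {C : Set Y}

lemma exists_support_of_mem_closure_not_mem (hconv : Convex ℝ C)
    (hcone : ∀ c : ℝ, 0 ≤ c → ∀ x ∈ C, c • x ∈ C) (h0C : (0:Y) ∈ C)
    {w : Y} (hwcl : w ∈ closure C) (hw : w ∉ C) :
    ∃ a : Y, a ∈ dualSet C ∧ ⟪a, w⟫ = 0 ∧ ∃ x ∈ C, 0 < ⟪a, x⟫ := by
  set V := Submodule.span ℝ C with hV
  have hCV : C ⊆ (V : Set Y) := Submodule.subset_span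
  set D := (V.subtype) ⁻¹' C with hD
  have hDconv : Convex ℝ D := hconv.linear_preimage V.subtype
  have h0D : (0 : V) ∈ D := by
    show V.subtype 0 ∈ C
    rw [map_zero]; exact h0C
  have hDcone : ∀ t : ℝ, 0 ≤ t → ∀ b ∈ D, t • b ∈ D := by
    intro t ht b hb
    show V.subtype (t • b) ∈ C
    rw [map_smul]
    exact hcone t ht _ hb
  have hspanD : Submodule.span ℝ D = ⊤ := span_preimage_top hconv
  have hint : (interior D).Nonempty := interior_nonempty_of_span_top hDconv h0D hspanD
  have hDsub : D ⊆ closure (interior D) := convex_subset_closure_interior hDconv hint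
  -- w lies in V
  have hwV : w ∈ V := by
    have : closure C ⊆ (V : Set Y) :=
      closure_minimal hCV (Submodule.closed_of_finiteDimensional V)
    exact this hwcl
  set w' : V := ⟨w, hwV⟩ with hw'
  have hw'D : w' ∉ interior D := fun h => hw (Set.mem_preimage.mp (interior_subset h))
  obtain ⟨f, hf⟩ := geometric_hahn_banach_open_point (hDconv.interior) isOpen_interior hw'D
  -- f ≤ f w' on D
  have hfD : ∀ b ∈ D, f b ≤ f w' := by
    intro b hb
    have hcl : closure (interior D) ⊆ {b : V | f b ≤ f w'} :=
      closure_minimal (fun b hb => (hf b hb).le)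
        (isClosed_le f.continuous continuous_const)
    exact hcl (hDsub hb)
  have hfw0 : 0 ≤ f w' := by
    have := hfD 0 h0D
    rwa [map_zero] at this
  have hfneg : ∀ b ∈ D, f b ≤ 0 := by
    intro b hb
    by_contra hpos
    push_neg at hpos
    have ht : 0 < (f w' + 1) / f b := div_pos (by linarith) hpos
    have := hfD _ (hDcone _ ht.le b hb)
    rw [map_smul, smul_eq_mul, div_mul_cancel₀ _ (ne_of_gt hpos)] at this
    linarith
  -- global functional
  set g : Y →L[ℝ] ℝ := f.comp (V.orthogonalProjectionOnto) with hg
  have hgC : ∀ x ∈ C, g x ≤ 0 := by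
    intro x hx
    have hxV : x ∈ V := hCV hx
    have : V.orthogonalProjectionOnto x = ⟨x, hxV⟩ := by
      exact Submodule.orthogonalProjectionOnto_mem_subspace_eq_self (⟨x, hxV⟩ : V)
    show f (V.orthogonalProjectionOnto x) ≤ 0
    rw [this]
    exact hfneg _ hx
  have hgw : g w ≤ 0 := by
    have hcl : closure C ⊆ {x : Y | g x ≤ 0} :=
      closure_minimal hgC (isClosed_le g.continuous continuous_const)
    exact hcl hwcl
  have hgww : g w = f w' := by
    show f (V.orthogonalProjectionOnto w) = f w'
    congr 1
    exact Submodule.orthogonalProjectionOnto_mem_subspace_eq_self w'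
  have hfw'0 : f w' = 0 := le_antisymm (hgww ▸ hgw) hfw0
  -- the vector a
  set a : Y := (InnerProductSpace.toDual ℝ Y).symm (-g) with ha
  have hax : ∀ x : Y, ⟪a, x⟫ = -(g x) := by
    intro x
    rw [ha, InnerProductSpace.toDual_symm_apply]
    rfl
  refine ⟨a, ?_, ?_, ?_⟩
  · intro x hx
    rw [real_inner_comm, hax]
    linarith [hgC x hx]
  · rw [hax, hgww, hfw'0, neg_zero]
  · obtain ⟨x0, hx0⟩ := hint
    refine ⟨(x0 : Y), Set.mem_preimage.mp (interior_subset hx0), ?_⟩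
    have : g (x0 : Y) = f x0 := by
      show f (V.orthogonalProjectionOnto (x0:Y)) = f x0
      congr 1
      exact Submodule.orthogonalProjectionOnto_mem_subspace_eq_self x0
    rw [hax, this]
    have := hf x0 hx0
    rw [hfw'0] at this
    linarith

end FactR

section FactS

lemma exists_face_separation {C F : Set Y} (hconv : Convex ℝ C)
    (hcone : ∀ c : ℝ, 0 ≤ c → ∀ x ∈ C, c • x ∈ C) (h0C : (0:Y) ∈ C)
    (hFconv : Convex ℝ F) (h0F : (0:Y) ∈ F)
    (hFcone : ∀ t : ℝ, 0 ≤ t → ∀ x ∈ F, t • x ∈ F)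
    (hFC : F ⊆ C)
    (hface : ∀ y z : Y, y ∈ C → z ∈ C → (2⁻¹ : ℝ) • (y + z) ∈ F → y ∈ F ∧ z ∈ F)
    (hne : F ≠ C) :
    ∃ a : Y, a ∈ dualSet C ∧ a ∈ perpSet F ∧ ∃ x ∈ C, 0 < ⟪a, x⟫ := by
  set V := Submodule.span ℝ C with hV
  have hCV : C ⊆ (V : Set Y) := Submodule.subset_span
  set D := (V.subtype) ⁻¹' C with hD
  set G := (V.subtype) ⁻¹' F with hG
  have hDconv : Convex ℝ D := hconv.linear_preimage V.subtype
  have hGconv : Convex ℝ G := hFconv.linear_preimage V.subtype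
  have h0D : (0 : V) ∈ D := by show V.subtype 0 ∈ C; rw [map_zero]; exact h0C
  have h0G : (0 : V) ∈ G := by show V.subtype 0 ∈ F; rw [map_zero]; exact h0F
  have hDcone : ∀ t : ℝ, 0 ≤ t → ∀ b ∈ D, t • b ∈ D := by
    intro t ht b hb
    show V.subtype (t • b) ∈ C
    rw [map_smul]; exact hcone t ht _ hb
  have hGcone : ∀ t : ℝ, 0 ≤ t → ∀ b ∈ G, t • b ∈ G := by
    intro t ht b hb
    show V.subtype (t • b) ∈ F
    rw [map_smul]; exact hFcone t ht _ hb
  have hspanD : Submodule.span ℝ D = ⊤ := span_preimage_top hconv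
  have hint : (interior D).Nonempty := interior_nonempty_of_span_top hDconv h0D hspanD
  have hDsub : D ⊆ closure (interior D) := convex_subset_closure_interior hDconv hint
  -- G and interior D are disjoint
  have hdisj : Disjoint (interior D) G := by
    rw [Set.disjoint_left]
    rintro b' hbint hbG
    -- absorbing argument: every x ∈ C would be in F
    have habs : ∀ x ∈ C, x ∈ F := by
      intro x hx
      set x' : V := ⟨x, hCV hx⟩ with hx'
      obtain ⟨ε, hε, hball⟩ := Metric.isOpen_iff.mp isOpen_interior b' hbint
      set δ : ℝ := ε / (2 * (‖x' - b'‖ + 1)) with hδ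
      have hδpos : 0 < δ := by
        apply div_pos hε
        positivity
      set u' : V := b' + δ • (b' - x') with hu'
      have hu'D : u' ∈ D := by
        apply interior_subset
        apply hball
        rw [Metric.mem_ball, dist_eq_norm]
        have : u' - b' = δ • (b' - x') := by rw [hu']; abel
        rw [this, norm_smul]
        simp only [Real.norm_eq_abs, abs_of_pos hδpos]
        have hN : ‖b' - x'‖ = ‖x' - b'‖ := norm_sub_rev _ _
        rw [hN, hδ, div_mul_eq_mul_div, div_lt_iff₀ (by positivity)]
        nlinarith [norm_nonneg (x' - b'), hε]
      -- back in Y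
      have hbF : ((b' : Y)) ∈ F := hbG
      have huC : ((u' : Y)) ∈ C := hu'D
      have hs1 : ((2 / (1 + δ)) : ℝ) • (u' : Y) ∈ C :=
        hcone _ (by positivity) _ huC
      have hs2 : ((2 * δ / (1 + δ)) : ℝ) • x ∈ C := hcone _ (by positivity) _ hx
      have hmid : (2⁻¹ : ℝ) • (((2 / (1 + δ)) : ℝ) • (u' : Y) + ((2 * δ / (1 + δ)) : ℝ) • x)
          = (b' : Y) := by
        have hcu : ((u' : Y)) = (b' : Y) + δ • ((b' : Y) - x) := by
          rw [hu']
          push_cast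
          rfl
        have hδ1 : (1 : ℝ) + δ ≠ 0 := by positivity
        rw [hcu]
        match_scalars <;> field_simp <;> ring
      have hmidF : (2⁻¹ : ℝ) • (((2 / (1 + δ)) : ℝ) • (u' : Y) + ((2 * δ / (1 + δ)) : ℝ) • x) ∈ F := by
        rw [hmid]; exact hbF
      have ht2 := (hface _ _ hs1 hs2 hmidF).2
      have := hFcone ((1 + δ) / (2 * δ)) (by positivity) _ ht2
      rwa [smul_smul, show ((1 + δ) / (2 * δ) * (2 * δ / (1 + δ)) : ℝ) = 1 by
        field_simp, one_smul] at this
    apply hne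
    apply Set.Subset.antisymm hFC
    intro x hx
    exact habs x hx
  obtain ⟨f, u, hfu, hGf⟩ := geometric_hahn_banach_open (hDconv.interior) isOpen_interior
    hGconv hdisj
  have hu0 : u ≤ 0 := by
    have := hGf 0 h0G
    rwa [map_zero] at this
  have hfD : ∀ b ∈ D, f b ≤ u := by
    intro b hb
    have hcl : closure (interior D) ⊆ {b : V | f b ≤ u} :=
      closure_minimal (fun b hb => (hfu b hb).le) (isClosed_le f.continuous continuous_const)
    exact hcl (hDsub hb)
  have hGD : G ⊆ D := fun b hb => hFC hb
  have hfG : ∀ b ∈ G, f b = 0 := by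
    intro b hb
    have hle : f b ≤ 0 := (hfD b (hGD hb)).trans hu0
    rcases eq_or_lt_of_le hle with h | h
    · exact h
    · exfalso
      have ht : 0 < (u - 1) / f b := div_pos_of_neg_of_neg (by linarith) h
      have := hGf _ (hGcone _ ht.le b hb)
      rw [map_smul, smul_eq_mul, div_mul_cancel₀ _ (ne_of_lt h)] at this
      linarith
  set g : Y →L[ℝ] ℝ := f.comp (V.orthogonalProjectionOnto) with hg
  have hgeq : ∀ x : Y, (hx : x ∈ V) → g x = f ⟨x, hx⟩ := by
    intro x hx
    show f (V.orthogonalProjectionOnto x) = f ⟨x, hx⟩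
    congr 1
    exact Submodule.orthogonalProjectionOnto_mem_subspace_eq_self (⟨x, hx⟩ : V)
  set a : Y := (InnerProductSpace.toDual ℝ Y).symm (-g) with ha
  have hax : ∀ x : Y, ⟪a, x⟫ = -(g x) := by
    intro x
    rw [ha, InnerProductSpace.toDual_symm_apply]
    rfl
  refine ⟨a, ?_, ?_, ?_⟩
  · intro x hx
    rw [real_inner_comm, hax, hgeq x (hCV hx)]
    have : f ⟨x, hCV hx⟩ ≤ u := hfD _ hx
    linarith
  · intro x hx
    rw [real_inner_comm, hax, hgeq x (hCV (hFC hx))]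
    rw [hfG ⟨x, hCV (hFC hx)⟩ hx]
    ring
  · obtain ⟨x0, hx0⟩ := hint
    refine ⟨(x0 : Y), Set.mem_preimage.mp (interior_subset hx0), ?_⟩
    rw [hax, hgeq _ x0.2]
    have := hfu x0 hx0
    have h2 : f ⟨(x0:Y), x0.2⟩ = f x0 := by congr 1
    rw [h2]
    linarith

end FactS

/-- The hyperplane cut `{x | ⟪a, x⟫ = 0}` basics. -/
lemma convex_ker (a : Y) : Convex ℝ {x : Y | ⟪a, x⟫ = 0} := by
  intro u hu v hv p q hp hq hpq
  simp only [Set.mem_setOf_eq] at *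
  rw [inner_add_right, real_inner_smul_right, real_inner_smul_right, hu, hv]
  ring

lemma finrank_cut_lt {C : Set Y} {a x₀ : Y} (hx₀ : x₀ ∈ C) (hax : ⟪a, x₀⟫ ≠ 0) :
    Module.finrank ℝ (Submodule.span ℝ (C ∩ {x : Y | ⟪a, x⟫ = 0}))
      < Module.finrank ℝ (Submodule.span ℝ C) := by
  apply Submodule.finrank_lt_finrank_of_lt
  have hle : Submodule.span ℝ (C ∩ {x : Y | ⟪a, x⟫ = 0}) ≤ Submodule.span ℝ C :=
    Submodule.span_mono Set.inter_subset_left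
  refine lt_of_le_of_ne hle ?_
  intro heq
  have hker : Submodule.span ℝ (C ∩ {x : Y | ⟪a, x⟫ = 0}) ≤
      LinearMap.ker (innerSL ℝ a : Y →L[ℝ] ℝ).toLinearMap := by
    apply Submodule.span_le.2
    rintro x ⟨-, hx⟩
    exact hx
  have : x₀ ∈ Submodule.span ℝ (C ∩ {x : Y | ⟪a, x⟫ = 0}) := by
    rw [heq]; exact Submodule.subset_span hx₀
  exact hax (hker this)

lemma lemB_sep {C : Set Y} (hconv : Convex ℝ C)
    (hcone : ∀ c : ℝ, 0 ≤ c → ∀ x ∈ C, c • x ∈ C) (h0 : (0:Y) ∈ C)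
    {w : Y} (hw : w ∉ closure C) : ∃ a₀ : Y, a₀ ∈ dualSet C ∧ ⟪a₀, w⟫ = -1 := by
  rw [← dualSet_dualSet hconv hcone h0] at hw
  have : ¬ ∀ x ∈ dualSet C, 0 ≤ ⟪x, w⟫ := hw
  push_neg at this
  obtain ⟨b, hb, hbw⟩ := this
  refine ⟨(-⟪b, w⟫)⁻¹ • b, smul_mem_dualSet hb (inv_nonneg.mpr (by linarith)), ?_⟩
  rw [real_inner_smul_left, inv_mul_eq_div, div_neg, div_self (ne_of_lt hbw)]

/-- Facial-reduction certificate of non-membership (the `a` sequence). -/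
lemma lemB : ∀ (n : ℕ) (C : Set Y), Convex ℝ C → (∀ c : ℝ, 0 ≤ c → ∀ x ∈ C, c • x ∈ C) →
    (0:Y) ∈ C → Module.finrank ℝ (Submodule.span ℝ C) ≤ n → ∀ w : Y, w ∉ C →
    ∃ (k : ℕ) (a : ℕ → Y),
      (∀ i ≤ k, a i ∈ dualSet (C ∩ {x | ∀ j, j < i → ⟪a j, x⟫ = 0})) ∧
      (∀ i < k, ⟪a i, w⟫ = 0) ∧ ⟪a k, w⟫ = -1 := by
  intro n
  induction n with
  | zero =>
    intro C hconv hcone h0 hrank w hw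
    have hwcl : w ∉ closure C := by
      have hC0 : C ⊆ ({0} : Set Y) := by
        intro x hx
        have hx' := Submodule.subset_span (R := ℝ) hx
        rw [Submodule.finrank_eq_zero.mp (le_antisymm hrank (Nat.zero_le _))] at hx'
        simpa using hx'
      intro hwcl
      have : w ∈ ({0} : Set Y) := closure_minimal hC0 isClosed_singleton hwcl
      rw [Set.mem_singleton_iff.mp this] at hw
      exact hw h0
    obtain ⟨a₀, ha₀, haw⟩ := lemB_sep hconv hcone h0 hwcl
    exact ⟨0, fun _ => a₀,
      fun i _ => dualSet_anti Set.inter_subset_left ha₀,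
      fun i hi => absurd hi (Nat.not_lt_zero i), haw⟩
  | succ n ih =>
    intro C hconv hcone h0 hrank w hw
    by_cases hwcl : w ∈ closure C
    · -- proper support and recursion
      obtain ⟨a₀, ha₀, ha₀w, x₀, hx₀, hax₀⟩ :=
        exists_support_of_mem_closure_not_mem hconv hcone h0 hwcl hw
      set C1 := C ∩ {x : Y | ⟪a₀, x⟫ = 0} with hC1
      have hC1conv : Convex ℝ C1 := hconv.inter (convex_ker a₀)
      have hC1cone : ∀ c : ℝ, 0 ≤ c → ∀ x ∈ C1, c • x ∈ C1 := by
        rintro c hc x ⟨hxC, hxa⟩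
        refine ⟨hcone c hc x hxC, ?_⟩
        simp only [Set.mem_setOf_eq] at hxa ⊢
        rw [real_inner_smul_right, hxa, mul_zero]
      have h0C1 : (0:Y) ∈ C1 := ⟨h0, by simp⟩
      have hrank1 : Module.finrank ℝ (Submodule.span ℝ C1) ≤ n := by
        have := finrank_cut_lt (C := C) hx₀ (ne_of_gt hax₀)
        rw [← hC1] at this
        omega
      have hwC1 : w ∉ C1 := fun h => hw h.1
      obtain ⟨k', a', hfr, hzero, hlast⟩ := ih C1 hC1conv hC1cone h0C1 hrank1 w hwC1
      refine ⟨k' + 1, fun m => Nat.casesOn m a₀ a', ?_, ?_, hlast⟩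
      · intro i hi
        cases i with
        | zero => exact dualSet_anti Set.inter_subset_left ha₀
        | succ i' =>
          have hi' : i' ≤ k' := Nat.succ_le_succ_iff.mp hi
          refine dualSet_anti ?_ (hfr i' hi')
          rintro x ⟨hxC, hxcut⟩
          refine ⟨⟨hxC, hxcut 0 (Nat.succ_pos i')⟩, ?_⟩
          intro j hj
          exact hxcut (j+1) (Nat.succ_lt_succ hj)
      · intro i hi
        cases i with
        | zero => exact ha₀w
        | succ i' => exact hzero i' (Nat.succ_lt_succ_iff.mp hi)
    · obtain ⟨a₀, ha₀, haw⟩ := lemB_sep hconv hcone h0 hwcl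
      exact ⟨0, fun _ => a₀,
        fun i _ => dualSet_anti Set.inter_subset_left ha₀,
        fun i hi => absurd hi (Nat.not_lt_zero i), haw⟩

/-- Chain of exposed faces from `C` down to `F` (the `y` sequence prefix). -/
lemma lemC {F : Set Y} (hFconv : Convex ℝ F) (h0F : (0:Y) ∈ F)
    (hFcone : ∀ t : ℝ, 0 ≤ t → ∀ x ∈ F, t • x ∈ F) :
    ∀ (n : ℕ) (C : Set Y), Convex ℝ C → (∀ c : ℝ, 0 ≤ c → ∀ x ∈ C, c • x ∈ C) →
    F ⊆ C → (∀ y z : Y, y ∈ C → z ∈ C → (2⁻¹ : ℝ) • (y + z) ∈ F → y ∈ F ∧ z ∈ F) →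
    Module.finrank ℝ (Submodule.span ℝ C) ≤ n →
    ∃ (l : ℕ) (y : ℕ → Y),
      (∀ j < l, y j ∈ dualSet (C ∩ {x | ∀ i, i < j → ⟪y i, x⟫ = 0}) ∧ y j ∈ perpSet F) ∧
      C ∩ {x | ∀ i, i < l → ⟪y i, x⟫ = 0} = F := by
  intro n
  induction n with
  | zero =>
    intro C hconv hcone hFC hface hrank
    have hC0 : C ⊆ ({0} : Set Y) := by
      intro x hx
      have hx' := Submodule.subset_span (R := ℝ) hx
      rw [Submodule.finrank_eq_zero.mp (le_antisymm hrank (Nat.zero_le _))] at hx'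
      simpa using hx'
    have hCF : C = F := by
      apply Set.Subset.antisymm _ hFC
      intro x hx
      rw [Set.mem_singleton_iff.mp (hC0 hx)]
      exact h0F
    refine ⟨0, fun _ => 0, fun j hj => absurd hj (Nat.not_lt_zero j), ?_⟩
    rw [← hCF]
    apply Set.Subset.antisymm Set.inter_subset_left
    intro x hx
    exact ⟨hx, fun i hi => absurd hi (Nat.not_lt_zero i)⟩
  | succ n ih =>
    intro C hconv hcone hFC hface hrank
    by_cases hFeq : F = C
    · refine ⟨0, fun _ => 0, fun j hj => absurd hj (Nat.not_lt_zero j), ?_⟩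
      rw [hFeq]
      apply Set.Subset.antisymm Set.inter_subset_left
      intro x hx
      exact ⟨hx, fun i hi => absurd hi (Nat.not_lt_zero i)⟩
    · have h0C : (0:Y) ∈ C := hFC h0F
      obtain ⟨y₀, hy₀dual, hy₀perp, x₀, hx₀, hyx₀⟩ :=
        exists_face_separation hconv hcone h0C hFconv h0F hFcone hFC hface hFeq
      set C1 := C ∩ {x : Y | ⟪y₀, x⟫ = 0} with hC1
      have hC1conv : Convex ℝ C1 := hconv.inter (convex_ker y₀)
      have hC1cone : ∀ c : ℝ, 0 ≤ c → ∀ x ∈ C1, c • x ∈ C1 := by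
        rintro c hc x ⟨hxC, hxa⟩
        refine ⟨hcone c hc x hxC, ?_⟩
        simp only [Set.mem_setOf_eq] at hxa ⊢
        rw [real_inner_smul_right, hxa, mul_zero]
      have hFC1 : F ⊆ C1 := by
        intro f hf
        refine ⟨hFC hf, ?_⟩
        show ⟪y₀, f⟫ = 0
        rw [real_inner_comm]
        exact hy₀perp f hf
      have hface1 : ∀ y z : Y, y ∈ C1 → z ∈ C1 → (2⁻¹ : ℝ) • (y + z) ∈ F → y ∈ F ∧ z ∈ F :=
        fun y z hy hz hm => hface y z hy.1 hz.1 hm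
      have hrank1 : Module.finrank ℝ (Submodule.span ℝ C1) ≤ n := by
        have := finrank_cut_lt (C := C) hx₀ (ne_of_gt hyx₀)
        rw [← hC1] at this
        omega
      obtain ⟨l', y', hchain, hinter⟩ := ih C1 hC1conv hC1cone hFC1 hface1 hrank1
      refine ⟨l' + 1, fun m => Nat.casesOn m y₀ y', ?_, ?_⟩
      · intro j hj
        cases j with
        | zero => exact ⟨dualSet_anti Set.inter_subset_left hy₀dual, hy₀perp⟩
        | succ j' =>
          have hj' : j' < l' := Nat.succ_lt_succ_iff.mp hj
          refine ⟨dualSet_anti ?_ (hchain j' hj').1, (hchain j' hj').2⟩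
          rintro x ⟨hxC, hxcut⟩
          refine ⟨⟨hxC, hxcut 0 (Nat.succ_pos j')⟩, ?_⟩
          intro i hi
          exact hxcut (i+1) (Nat.succ_lt_succ hi)
      · rw [← hinter]
        ext x
        constructor
        · rintro ⟨hxC, hxcut⟩
          exact ⟨⟨hxC, hxcut 0 (Nat.succ_pos l')⟩, fun i hi => hxcut (i+1) (Nat.succ_lt_succ hi)⟩
        · rintro ⟨⟨hxC, hx0⟩, hxcut⟩
          refine ⟨hxC, ?_⟩
          intro i hi
          cases i with
          | zero => exact hx0
          | succ i' => exact hxcut i' (Nat.succ_lt_succ_iff.mp hi)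

open scoped Pointwise in
lemma closure_sum_eq {K F : Set Y} (hKcl : IsClosed K) (hKconv : Convex ℝ K)
    (hKcone : ∀ c : ℝ, 0 ≤ c → ∀ x ∈ K, c • x ∈ K) (hK0 : (0 : Y) ∈ K)
    (hF : IsFace K F) (h0F : (0:Y) ∈ F) :
    closure (dualSet K + perpSet F) = dualSet F := by
  have hMconv : Convex ℝ (dualSet K + perpSet F) := by
    apply Convex.add (convex_dualSet K)
    rw [perpSet_eq]
    exact Submodule.convex _
  have hMcone : ∀ c : ℝ, 0 ≤ c → ∀ x ∈ dualSet K + perpSet F, c • x ∈ dualSet K + perpSet F := by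
    intro c hc x hx
    rcases Set.mem_add.mp hx with ⟨u, hu, v, hv, rfl⟩
    rw [smul_add]
    refine Set.add_mem_add (smul_mem_dualSet hu hc) ?_
    rw [perpSet_eq] at hv ⊢
    exact Submodule.smul_mem _ c hv
  have h0M : (0:Y) ∈ dualSet K + perpSet F := by
    have := Set.add_mem_add (zero_mem_dualSet K) (zero_mem_perpSet F)
    rwa [add_zero] at this
  have hdM : dualSet (dualSet K + perpSet F) = F := by
    rw [dualSet_add (zero_mem_dualSet K) (zero_mem_perpSet F)]
    rw [dualSet_dualSet hKconv hKcone hK0, hKcl.closure_eq]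
    rw [perpSet_eq, dualSet_submodule, Submodule.orthogonal_orthogonal]
    apply Set.Subset.antisymm (face_inter_span hF hKcone hK0 h0F)
    exact fun f hf => ⟨hF.1 hf, Submodule.subset_span hf⟩
  calc closure (dualSet K + perpSet F)
      = dualSet (dualSet (dualSet K + perpSet F)) := (dualSet_dualSet hMconv hMcone h0M).symm
    _ = dualSet F := by rw [hdM]


end Helpers

open scoped Pointwise in
/-- Exact characterization of when `K* + F^⊥` is not closed, for a face `F` of `K`, via
facial reduction sequences. -/
theorem stmt_16 (K : Set Y) (hKcl : IsClosed K) (hKconv : Convex ℝ K)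
    (hKcone : ∀ c : ℝ, 0 ≤ c → ∀ x ∈ K, c • x ∈ K) (hK0 : (0 : Y) ∈ K)
    (F : Set Y) (hF : IsFace K F) :
    ¬ IsClosed (dualSet K + perpSet F) ↔
      ∃ (k l : ℕ) (a : Fin (k + 1) → Y) (y : Fin (l + 1) → Y),
        1 ≤ k ∧ 1 ≤ l ∧ IsFRSeq (dualSet K) a ∧ IsFRSeq K y ∧
        (∀ i, a i ∈ Submodule.span ℝ F) ∧
        (∀ j : Fin (l + 1), (j : ℕ) < l → y j ∈ perpSet F) ∧
        (∀ i : Fin (k + 1), (i : ℕ) < k → ⟪a i, y (Fin.last l)⟫ = 0) ∧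
        ⟪a (Fin.last k), y (Fin.last l)⟫ = -1 := by
  constructor
  · -- forward direction
    intro hncl
    have hFne : F.Nonempty := by
      by_contra h
      rw [Set.not_nonempty_iff_eq_empty] at h
      apply hncl
      have huniv : dualSet K + perpSet F = Set.univ := by
        apply Set.eq_univ_of_forall
        intro x
        have hx : x ∈ perpSet F := by
          rw [h]; intro z hz; exact absurd hz (Set.notMem_empty z)
        have := Set.add_mem_add (zero_mem_dualSet K) hx
        rwa [zero_add] at this
      rw [huniv]
      exact isClosed_univ
    have h0F : (0:Y) ∈ F := face_zero_mem hF hKcone hK0 hFne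
    have hFconv : Convex ℝ F := hF.2.1
    have hFcone : ∀ t : ℝ, 0 ≤ t → ∀ x ∈ F, t • x ∈ F :=
      fun t ht x hx => face_smul_mem hF hKcone hK0 h0F ht hx
    set M := dualSet K + perpSet F with hM
    have hMconv : Convex ℝ M := by
      apply Convex.add (convex_dualSet K)
      rw [perpSet_eq]
      exact Submodule.convex _
    have hMcone : ∀ c : ℝ, 0 ≤ c → ∀ x ∈ M, c • x ∈ M := by
      intro c hc x hx
      rcases Set.mem_add.mp hx with ⟨u, hu, v, hv, rfl⟩
      rw [smul_add]
      refine Set.add_mem_add (smul_mem_dualSet hu hc) ?_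
      rw [perpSet_eq] at hv ⊢
      exact Submodule.smul_mem _ c hv
    have h0M : (0:Y) ∈ M := by
      have := Set.add_mem_add (zero_mem_dualSet K) (zero_mem_perpSet F)
      rwa [add_zero] at this
    have hclM : closure M = dualSet F := closure_sum_eq hKcl hKconv hKcone hK0 hF h0F
    -- get the point z
    have hnsub : ¬ closure M ⊆ M := by
      intro hsub
      exact hncl (Set.Subset.antisymm subset_closure hsub ▸ isClosed_closure)
    obtain ⟨z, hzcl, hzM⟩ := Set.not_subset.mp hnsub
    -- a-sequence
    obtain ⟨k', a', hfrA, hzeroA, hlastA⟩ :=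
      lemB (Module.finrank ℝ Y) M hMconv hMcone h0M (Submodule.finrank_le _) z hzM
    have hKsubM : dualSet K ⊆ M := by
      intro u hu
      have := Set.add_mem_add hu (zero_mem_perpSet F)
      rwa [add_zero] at this
    have hperpsubM : perpSet F ⊆ M := by
      intro v hv
      have := Set.add_mem_add (zero_mem_dualSet K) hv
      rwa [zero_add] at this
    -- all a' i lie in span F
    have hspanA : ∀ i, i ≤ k' → a' i ∈ Submodule.span ℝ F := by
      intro i
      induction i using Nat.strong_induction_on with
      | _ i ihs =>
        intro hi
        have hsub : perpSet F ⊆ M ∩ {x | ∀ j, j < i → ⟪a' j, x⟫ = 0} := by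
          intro v hv
          refine ⟨hperpsubM hv, ?_⟩
          intro j hj
          exact inner_eq_zero_of_span_perp (ihs j hj (le_of_lt (lt_of_lt_of_le hj hi))) hv
        have hperp_neg : ∀ v ∈ perpSet F, -v ∈ perpSet F := by
          intro v hv
          rw [perpSet_eq] at hv ⊢
          exact Submodule.neg_mem _ hv
        rw [← Submodule.orthogonal_orthogonal (Submodule.span ℝ F)]
        rw [Submodule.mem_orthogonal]
        intro u hu
        have huP : u ∈ perpSet F := by rw [perpSet_eq]; exact hu
        have h1 : 0 ≤ ⟪u, a' i⟫ := hfrA i hi u (hsub huP)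
        have h2 : 0 ≤ ⟪-u, a' i⟫ := hfrA i hi (-u) (hsub (hperp_neg u huP))
        rw [inner_neg_left] at h2
        linarith
    -- y-sequence (chain)
    obtain ⟨l', y', hchain, hinter⟩ :=
      lemC hFconv h0F hFcone (Module.finrank ℝ Y) K hKconv hKcone hF.1
        (fun p q hp hq hm => hF.2.2 p q hp hq hm) (Submodule.finrank_le _)
    -- padded sequences
    set aN : ℕ → Y := fun m => Nat.casesOn m 0 a' with haN
    set yN : ℕ → Y := fun m => Nat.casesOn m 0 y' with hyN
    set k := k' + 1 with hk
    set l := l' + 1 with hl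
    have haN_fr : ∀ i ≤ k, aN i ∈ dualSet (M ∩ {x | ∀ j, j < i → ⟪aN j, x⟫ = 0}) := by
      intro i hi
      cases i with
      | zero => exact zero_mem_dualSet _
      | succ i' =>
        refine dualSet_anti ?_ (hfrA i' (Nat.succ_le_succ_iff.mp hi))
        rintro x ⟨hxM, hxcut⟩
        refine ⟨hxM, ?_⟩
        intro j hj
        exact hxcut (j+1) (Nat.succ_lt_succ hj)
    have haN_span : ∀ i ≤ k, aN i ∈ Submodule.span ℝ F := by
      intro i hi
      cases i with
      | zero => exact Submodule.zero_mem _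
      | succ i' => exact hspanA i' (Nat.succ_le_succ_iff.mp hi)
    have haN_zero : ∀ i < k, ⟪aN i, z⟫ = 0 := by
      intro i hi
      cases i with
      | zero => exact inner_zero_left z
      | succ i' => exact hzeroA i' (Nat.succ_lt_succ_iff.mp hi)
    have haN_last : ⟪aN k, z⟫ = -1 := hlastA
    have hyN_chain : ∀ j < l,
        yN j ∈ dualSet (K ∩ {x | ∀ i, i < j → ⟪yN i, x⟫ = 0}) ∧ yN j ∈ perpSet F := by
      intro j hj
      cases j with
      | zero => exact ⟨zero_mem_dualSet _, zero_mem_perpSet F⟩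
      | succ j' =>
        have hj' : j' < l' := Nat.succ_lt_succ_iff.mp hj
        refine ⟨dualSet_anti ?_ (hchain j' hj').1, (hchain j' hj').2⟩
        rintro x ⟨hxK, hxcut⟩
        refine ⟨hxK, ?_⟩
        intro i hi
        exact hxcut (i+1) (Nat.succ_lt_succ hi)
    have hyN_inter : K ∩ {x | ∀ i, i < l → ⟪yN i, x⟫ = 0} = F := by
      rw [← hinter]
      ext x
      constructor
      · rintro ⟨hxK, hxcut⟩
        exact ⟨hxK, fun i hi => hxcut (i+1) (Nat.succ_lt_succ hi)⟩
      · rintro ⟨hxK, hxcut⟩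
        refine ⟨hxK, ?_⟩
        intro i hi
        cases i with
        | zero => exact inner_zero_left x
        | succ i' => exact hxcut i' (Nat.succ_lt_succ_iff.mp hi)
    have hzF : z ∈ dualSet F := by rw [← hclM]; exact hzcl
    -- Fin-indexed sequences
    refine ⟨k, l, fun i => aN i, fun j => if (j:ℕ) < l then yN j else z,
      Nat.le_add_left 1 k', Nat.le_add_left 1 l', ?_, ?_, ?_, ?_, ?_, ?_⟩
    · -- IsFRSeq (dualSet K) a
      intro i
      refine dualSet_anti ?_ (haN_fr i (Nat.lt_succ_iff.mp i.isLt))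
      rintro x ⟨hxK, hxcut⟩
      refine ⟨hKsubM hxK, ?_⟩
      intro j hj
      have hjk : j < k + 1 := lt_trans hj i.isLt
      exact hxcut ⟨j, hjk⟩ (by rwa [Fin.lt_def])
    · -- IsFRSeq K y
      intro j
      by_cases hj : (j:ℕ) < l
      · simp only [hj, if_pos]
        refine dualSet_anti ?_ (hyN_chain j hj).1
        rintro x ⟨hxK, hxcut⟩
        refine ⟨hxK, ?_⟩
        intro i hi
        have hil : i < l := lt_trans hi hj
        have := hxcut ⟨i, lt_trans hil (Nat.lt_succ_self l)⟩ (by rwa [Fin.lt_def])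
        simpa [hil] using this
      · have hjl : (j:ℕ) = l := le_antisymm (Nat.lt_succ_iff.mp j.isLt) (not_lt.mp hj)
        simp only [hj, if_neg, not_false_iff]
        have hcut_eq : frCut K (fun j' : Fin (l+1) => if (j':ℕ) < l then yN j' else z) j = F := by
          rw [← hyN_inter]
          unfold frCut
          ext x
          constructor
          · rintro ⟨hxK, hxcut⟩
            refine ⟨hxK, ?_⟩
            intro i hi
            have := hxcut ⟨i, lt_trans hi (Nat.lt_succ_self l)⟩
              (by rw [Fin.lt_def]; simp only; omega)
            simpa [hi] using this
          · rintro ⟨hxK, hxcut⟩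
            refine ⟨hxK, ?_⟩
            intro i hi
            have hil : (i:ℕ) < l := by
              rw [Fin.lt_def, hjl] at hi
              exact hi
            simpa [hil] using hxcut (i : ℕ) hil
        rw [hcut_eq]
        exact hzF
    · intro i
      exact haN_span i (Nat.lt_succ_iff.mp i.isLt)
    · intro j hj
      simp only [hj, if_pos]
      exact (hyN_chain j hj).2
    · intro i hi
      simp only [Fin.val_last, lt_self_iff_false, if_false]
      exact haN_zero i hi
    · simp only [Fin.val_last, lt_self_iff_false, if_false]
      exact haN_last
  · -- reverse direction
    rintro ⟨k, l, a, y, hk, hl, hfrA, hfrY, hspan, hperp, hzero, hlast⟩ hcl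
    set ylast := y (Fin.last l) with hylast
    have hylastF : ylast ∈ dualSet F := by
      have hsub : F ⊆ frCut K y (Fin.last l) := by
        intro f hf
        refine ⟨hF.1 hf, ?_⟩
        intro j hj
        have hjl : (j:ℕ) < l := by rwa [Fin.lt_def] at hj
        rw [real_inner_comm]
        exact hperp j hjl f hf
      exact dualSet_anti hsub (hfrY (Fin.last l))
    have hylastM : ylast ∈ dualSet K + perpSet F := by
      rcases F.eq_empty_or_nonempty with hFe | hFne
      · have hperpuniv : ylast ∈ perpSet F := by
          rw [hFe]; intro x hx; exact absurd hx (Set.notMem_empty x)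
        have := Set.add_mem_add (zero_mem_dualSet K) hperpuniv
        rwa [zero_add] at this
      · have h0F : (0:Y) ∈ F := face_zero_mem hF hKcone hK0 hFne
        have hclM : closure (dualSet K + perpSet F) = dualSet F :=
          closure_sum_eq hKcl hKconv hKcone hK0 hF h0F
        rw [← hcl.closure_eq, hclM]
        exact hylastF
    obtain ⟨u, hu, v, hv, huv⟩ := Set.mem_add.mp hylastM
    have key : ∀ m : ℕ, m ≤ k → ∀ j : Fin (k+1), (j:ℕ) < m → ⟪a j, u⟫ = 0 := by
      intro m
      induction m with
      | zero => intro _ j hj; exact absurd hj (Nat.not_lt_zero _)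
      | succ m ihm =>
        intro hm j hj
        rcases Nat.lt_succ_iff_lt_or_eq.mp hj with h | h
        · exact ihm (Nat.le_of_succ_le hm) j h
        · have humem : u ∈ frCut (dualSet K) a j :=
            ⟨hu, fun i hij => ihm (Nat.le_of_succ_le hm) i
              (by rw [Fin.lt_def] at hij; omega)⟩
          have h1 : 0 ≤ ⟪u, a j⟫ := hfrA j u humem
          have h2 : ⟪a j, ylast⟫ = 0 := hzero j (by omega)
          have h3 : ⟪a j, v⟫ = 0 := inner_eq_zero_of_span_perp (hspan j) hv
          rw [← huv, inner_add_right, h3, add_zero] at h2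
          exact h2
    have humem : u ∈ frCut (dualSet K) a (Fin.last k) :=
      ⟨hu, fun i hi => key k le_rfl i (by rwa [Fin.lt_def] at hi)⟩
    have h1 : 0 ≤ ⟪u, a (Fin.last k)⟫ := hfrA (Fin.last k) u humem
    have h3 : ⟪a (Fin.last k), v⟫ = 0 := inner_eq_zero_of_span_perp (hspan _) hv
    have h2 : ⟪a (Fin.last k), u⟫ = -1 := by
      rw [← huv, inner_add_right, h3, add_zero] at hlast
      exact hlast
    rw [real_inner_comm] at h1
    linarith
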